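/- Let ι be a nonempty finite set, p : ι → ℝ with p_i ≥ 0 for all i and ∑_{i∈ι} p_i = 1, and x : ι → ℝ. Then the function β ↦ −β^{−1}·log(∑_{i∈ι} p_i·exp(−β·x_i)) is non-increasing on (0,∞): for all 0 < β₁ ≤ β₂, −β₂^{−1}·log(∑_i p_i·exp(−β₂·x_i)) ≤ −β₁^{−1}·log(∑_i p_i·exp(−β₁·x_i)). -/

import Mathlib

theorem stmt12 {ι : Type*} [Fintype ι] [Nonempty ι]
    (p : ι → ℝ) (hp : ∀ i, 0 ≤ p i) (hps : ∑ i, p i = 1) (x : ι → ℝ) :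
    ∀ β₁ β₂ : ℝ, 0 < β₁ → β₁ ≤ β₂ →
      -β₂⁻¹ * Real.log (∑ i, p i * Real.exp (-β₂ * x i))
        ≤ -β₁⁻¹ * Real.log (∑ i, p i * Real.exp (-β₁ * x i)) := by
  intro β₁ β₂ hβ₁ h12
  have hβ₂ : 0 < β₂ := lt_of_lt_of_le hβ₁ h12
  -- there is an index with positive weight
  obtain ⟨j, hj⟩ : ∃ j, 0 < p j := by
    by_contra h
    push_neg at h
    have : ∑ i, p i = 0 := Finset.sum_eq_zero fun i _ => le_antisymm (h i) (hp i)
    rw [hps] at this; norm_num at this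
  have hSpos : ∀ β : ℝ, 0 < ∑ i, p i * Real.exp (-β * x i) := fun β => by
    apply Finset.sum_pos' (fun i _ => mul_nonneg (hp i) (Real.exp_pos _).le)
    exact ⟨j, Finset.mem_univ j, mul_pos hj (Real.exp_pos _)⟩
  set r : ℝ := β₁ / β₂ with hr
  have hrpos : 0 < r := div_pos hβ₁ hβ₂
  have hq : 1 ≤ 1 / r := by
    rw [le_div_iff₀ hrpos, one_mul, hr, div_le_one hβ₂]; exact h12
  -- key: ∑ p exp(-β₁ x) ≤ (∑ p exp(-β₂ x)) ^ r
  have key : ∑ i, p i * Real.exp (-β₁ * x i)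
      ≤ (∑ i, p i * Real.exp (-β₂ * x i)) ^ r := by
    have h1 : ∀ i, Real.exp (-β₁ * x i) = Real.exp (-β₂ * x i) ^ r := by
      intro i
      rw [← Real.exp_log (Real.exp_pos (-β₂ * x i)), Real.log_exp,
        ← Real.exp_mul]
      congr 1
      field_simp [hr]
      rw [hr]; field_simp
    have h2 : ∀ i, Real.exp (-β₂ * x i) = Real.exp (-β₁ * x i) ^ (1 / r) := by
      intro i
      rw [h1 i, ← Real.rpow_mul (Real.exp_pos _).le, mul_one_div,
        div_self hrpos.ne', Real.rpow_one]
    calc ∑ i, p i * Real.exp (-β₁ * x i)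
        ≤ (∑ i, p i * Real.exp (-β₁ * x i) ^ (1 / r)) ^ (1 / (1 / r)) := by
          exact Real.arith_mean_le_rpow_mean Finset.univ p _
            (fun i _ => hp i) hps (fun i _ => (Real.exp_pos _).le) hq
      _ = (∑ i, p i * Real.exp (-β₂ * x i)) ^ r := by
          rw [one_div_one_div]
          congr 1
          exact Finset.sum_congr rfl fun i _ => by rw [h2 i]
  have hlog : Real.log (∑ i, p i * Real.exp (-β₁ * x i))
      ≤ r * Real.log (∑ i, p i * Real.exp (-β₂ * x i)) := by
    have := Real.log_le_log (hSpos β₁) key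
    rwa [Real.log_rpow (hSpos β₂)] at this
  -- conclude
  have hgoal : β₁⁻¹ * Real.log (∑ i, p i * Real.exp (-β₁ * x i))
      ≤ β₂⁻¹ * Real.log (∑ i, p i * Real.exp (-β₂ * x i)) := by
    rw [inv_mul_le_iff₀ hβ₁]
    calc Real.log (∑ i, p i * Real.exp (-β₁ * x i))
        ≤ r * Real.log (∑ i, p i * Real.exp (-β₂ * x i)) := hlog
      _ = β₁ * (β₂⁻¹ * Real.log (∑ i, p i * Real.exp (-β₂ * x i))) := by
          rw [hr]; ring
  linarith
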